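/- Let θ = cf(λ) ≤ κ < λ, let D be an ultrafilter on κ, let ⟨μ_j : j < θ⟩ be an increasing continuous sequence of cardinals with limit λ, let g : κ → θ, and set λ_i = μ_{g(i)} for every i < κ; assume lim_D(⟨λ_i : i < κ⟩) = λ. If every function f with f(i) < λ_i for all i < κ admits an ordinal γ_f < λ such that {i < κ : f(i) < γ_f} ∈ D, then D is (κ,g)-weakly normal (hence (κ,θ)-weakly normal). -/

import Mathlib

universe u

open Cardinal Set

/-- Members of the product `∏_{i} λ_i`: functions choosing an ordinal below `(λ i).ord`
for every index `i`. -/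
def ProdFun {ι : Type u} (lam : ι → Cardinal.{u}) : Type (u + 1) :=
  {f : ι → Ordinal.{u} // ∀ i, f i < (lam i).ord}

/-- `D`-equality of members of the product. -/
def prodEquiv {ι : Type u} (D : Ultrafilter ι) (lam : ι → Cardinal.{u})
    (f g : ProdFun lam) : Prop :=
  {i | f.1 i = g.1 i} ∈ D

/-- The reduced product `∏_{i} λ_i / D`. -/
def ProdQuot {ι : Type u} (D : Ultrafilter ι) (lam : ι → Cardinal.{u}) : Type (u + 1) :=
  Quot (prodEquiv D lam)

/-- The cardinality of the reduced product `∏_{i} λ_i / D`. -/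
noncomputable def prodCard {ι : Type u} (D : Ultrafilter ι) (lam : ι → Cardinal.{u}) :
    Cardinal.{u + 1} :=
  Cardinal.mk (ProdQuot D lam)

/-- `μ = lim_D ⟨λ_i : i < κ⟩` : for every `β < μ`, the set `{i : β < λ_i ≤ μ}` is in `D`. -/
def IsLimD {ι : Type u} (D : Ultrafilter ι) (lam : ι → Cardinal.{u}) (μ : Cardinal.{u}) :
    Prop :=
  ∀ β < μ, {i | β < lam i ∧ lam i ≤ μ} ∈ D

/-- `D` is `(κ, g)`-weakly normal, where `g : κ → θ`. -/
def WeaklyNormalWith {ι : Type u} (D : Ultrafilter ι) (θ : Cardinal.{u})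
    (g : ι → Ordinal.{u}) : Prop :=
  (∀ i, g i < θ.ord) ∧
  (∀ ε < θ.ord, {i | ε ≤ g i} ∈ D) ∧
  (∀ f : ι → Ordinal.{u}, (∀ i, f i < g i) → ∃ j < θ.ord, {i | f i < j} ∈ D)

/-- `D` is `(κ, θ)`-weakly normal: some `g : κ → θ` witnesses weak normality. -/
def WeaklyNormal {ι : Type u} (D : Ultrafilter ι) (θ : Cardinal.{u}) : Prop :=
  ∃ g : ι → Ordinal.{u}, WeaklyNormalWith D θ g

theorem stmt_4 {ι : Type u} (κ θ la : Cardinal.{u}) (hι : #ι = κ) (D : Ultrafilter ι)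
    (hθ : θ = la.ord.cof) (hθκ : θ ≤ κ) (hκla : κ < la)
    (μseq : Ordinal.{u} → Cardinal.{u})
    (hmono : ∀ j k : Ordinal.{u}, j < k → k < θ.ord → μseq j < μseq k)
    (hcont : ∀ j < θ.ord, Order.IsSuccLimit j → μseq j = ⨆ k : Set.Iio j, μseq k.1)
    (hbd : ∀ j < θ.ord, μseq j ≤ la)
    (hlimseq : ∀ β < la, ∃ j < θ.ord, β < μseq j)
    (g : ι → Ordinal.{u}) (hgθ : ∀ i, g i < θ.ord)
    (lam : ι → Cardinal.{u}) (hlam : ∀ i, lam i = μseq (g i))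
    (hlimD : IsLimD D lam la)
    (hbound : ∀ f : ι → Ordinal.{u}, (∀ i, f i < (lam i).ord) →
      ∃ γ < la.ord, {i | f i < γ} ∈ D) :
    WeaklyNormalWith D θ g ∧ WeaklyNormal D θ := by
  have hla0 : la ≠ 0 := fun h => by simp [h] at hκla
  -- part (2): for every ε < θ.ord, {i | ε ≤ g i} ∈ D
  have part2 : ∀ ε < θ.ord, {i | ε ≤ g i} ∈ D := by
    intro ε hε
    rcases Ordinal.zero_or_succ_or_isSuccLimit la.ord with h0 | ⟨b, hb⟩ | hlim
    · exact absurd (Cardinal.ord_eq_zero.1 h0) hla0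
    · -- here θ = 1, so ε = 0 and the set is everything
      have hθ1 : θ = 1 := by rw [hθ, ← hb, Ordinal.cof_succ]
      have : ε = 0 := by
        have : ε < 1 := by simpa [hθ1] using hε
        exact Ordinal.lt_one_iff_zero.1 this
      subst this
      have : {i | (0 : Ordinal) ≤ g i} = Set.univ :=
        Set.eq_univ_of_forall fun i => (zero_le : (0 : Ordinal) ≤ g i)
      rw [this]; exact Filter.univ_mem
    · have hθinf : ℵ₀ ≤ θ := hθ ▸ Ordinal.aleph0_le_cof.2 hlim
      have hordlim := Cardinal.isSuccLimit_ord hθinf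
      have hε1 : Order.succ ε < θ.ord := hordlim.succ_lt hε
      have hβ : μseq ε < la :=
        lt_of_lt_of_le (hmono ε (Order.succ ε) (Order.lt_succ ε) hε1) (hbd _ hε1)
      have hA := hlimD (μseq ε) hβ
      refine Filter.mem_of_superset hA ?_
      intro i hi
      by_contra hcon
      have hgi : g i < ε := lt_of_not_ge hcon
      have := hmono (g i) ε hgi hε
      rw [← hlam i] at this
      exact absurd hi.1 this.not_gt
  -- part (3): every (κ,g)-regressive f is bounded below θ.ord on a set in D
  have part3 : ∀ f : ι → Ordinal.{u}, (∀ i, f i < g i) → ∃ j < θ.ord, {i | f i < j} ∈ D := by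
    intro f hf
    have hF : ∀ i, (μseq (f i)).ord < (lam i).ord := fun i =>
      Cardinal.ord_lt_ord.2 (hlam i ▸ hmono (f i) (g i) (hf i) (hgθ i))
    obtain ⟨γ, hγ, hS⟩ := hbound (fun i => (μseq (f i)).ord) hF
    obtain ⟨j, hj, hβj⟩ := hlimseq γ.card (Cardinal.lt_ord.1 hγ)
    refine ⟨j, hj, Filter.mem_of_superset hS ?_⟩
    intro i hi
    have h1 : μseq (f i) ≤ γ.card := by
      have := Ordinal.card_le_card hi.le
      rwa [Cardinal.card_ord] at this
    have h2 : μseq (f i) < μseq j := h1.trans_lt hβj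
    by_contra hcon
    simp only [Set.mem_setOf_eq] at hcon
    rcases lt_or_eq_of_le (le_of_not_gt hcon) with h | h
    · exact absurd (hmono j (f i) h ((hf i).trans (hgθ i))) h2.not_gt
    · exact absurd h2 (h ▸ lt_irrefl _)
  have hW : WeaklyNormalWith D θ g := ⟨hgθ, part2, part3⟩
  exact ⟨hW, g, hW⟩
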